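/- arXiv:1703.05962 — 3 statements merged into one kernel-verified Lean document; each statement's English description precedes it below -/
import Mathlib

section
/- Let A = k⟨X,Y⟩/(X^a, XY−qYX, Y^a) where q ∈ k is a primitive a-th root of unity, a ≥ 2. Then the center of A is 2-dimensional, spanned by 1 and x^{a-1}y^{a-1}. -/
open scoped TensorProduct
open Finset MulOpposite

noncomputable section

inductive QciRel (k : Type) [Field k] (a : ℕ) (q : k) :
    FreeAlgebra k (Fin 2) → FreeAlgebra k (Fin 2) → Prop
  | xa : QciRel k a q ((FreeAlgebra.ι k (0 : Fin 2)) ^ a) 0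
  | ya : QciRel k a q ((FreeAlgebra.ι k (1 : Fin 2)) ^ a) 0
  | comm : QciRel k a q (FreeAlgebra.ι k (0 : Fin 2) * FreeAlgebra.ι k (1 : Fin 2))
      (algebraMap k (FreeAlgebra k (Fin 2)) q *
        (FreeAlgebra.ι k (1 : Fin 2) * FreeAlgebra.ι k (0 : Fin 2)))

/-- The quantum complete intersection `k⟨X,Y⟩/(X^a, XY - qYX, Y^a)`. -/
abbrev Qci (k : Type) [Field k] (a : ℕ) (q : k) := RingQuot (QciRel k a q)

/-- The image of `X` in the quantum complete intersection. -/
def qx (k : Type) [Field k] (a : ℕ) (q : k) : Qci k a q :=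
  RingQuot.mkAlgHom k (QciRel k a q) (FreeAlgebra.ι k (0 : Fin 2))

/-- The image of `Y` in the quantum complete intersection. -/
def qy (k : Type) [Field k] (a : ℕ) (q : k) : Qci k a q :=
  RingQuot.mkAlgHom k (QciRel k a q) (FreeAlgebra.ι k (1 : Fin 2))

namespace QciAux

variable (k : Type) [Field k] (a : ℕ) (q : k)

lemma qx_pow_a : qx k a q ^ a = 0 := by
  rw [qx, ← map_pow, RingQuot.mkAlgHom_rel k QciRel.xa, map_zero]

lemma qy_pow_a : qy k a q ^ a = 0 := by
  rw [qy, ← map_pow, RingQuot.mkAlgHom_rel k QciRel.ya, map_zero]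

lemma qx_pow_zero {n : ℕ} (h : a ≤ n) : qx k a q ^ n = 0 := by
  rw [← Nat.sub_add_cancel h, pow_add, qx_pow_a, mul_zero]

lemma qy_pow_zero {n : ℕ} (h : a ≤ n) : qy k a q ^ n = 0 := by
  rw [← Nat.sub_add_cancel h, pow_add, qy_pow_a, mul_zero]

lemma qx_mul_qy : qx k a q * qy k a q = q • (qy k a q * qx k a q) := by
  rw [qx, qy, ← map_mul, RingQuot.mkAlgHom_rel k QciRel.comm, map_mul, map_mul,
    AlgHom.commutes, ← Algebra.smul_def]

lemma qx_mul_qy_pow (n : ℕ) :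
    qx k a q * qy k a q ^ n = q ^ n • (qy k a q ^ n * qx k a q) := by
  induction n with
  | zero => simp
  | succ n ih =>
    rw [pow_succ, ← mul_assoc, ih, smul_mul_assoc, mul_assoc, qx_mul_qy,
      mul_smul_comm, smul_smul, ← pow_succ, ← mul_assoc, ← pow_succ]

lemma qx_pow_mul_qy_pow (m n : ℕ) :
    qx k a q ^ m * qy k a q ^ n = q ^ (m * n) • (qy k a q ^ n * qx k a q ^ m) := by
  induction m with
  | zero => simp
  | succ m ih =>
    rw [pow_succ', mul_assoc, ih, mul_smul_comm, ← mul_assoc, qx_mul_qy_pow,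
      smul_mul_assoc, smul_smul, mul_assoc, ← pow_succ', ← pow_add]
    ring_nf

lemma mul_mon (u v u' v' : ℕ) :
    (qy k a q ^ u * qx k a q ^ v) * (qy k a q ^ u' * qx k a q ^ v') =
      q ^ (v * u') • (qy k a q ^ (u + u') * qx k a q ^ (v + v')) := by
  calc (qy k a q ^ u * qx k a q ^ v) * (qy k a q ^ u' * qx k a q ^ v')
      = qy k a q ^ u * ((qx k a q ^ v * qy k a q ^ u') * qx k a q ^ v') := by
        simp only [mul_assoc]
    _ = q ^ (v * u') • (qy k a q ^ (u + u') * qx k a q ^ (v + v')) := by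
        rw [qx_pow_mul_qy_pow, smul_mul_assoc, mul_smul_comm, pow_add, pow_add]
        simp only [mul_assoc]

lemma qx_mul_mon (u v : ℕ) :
    qx k a q * (qy k a q ^ u * qx k a q ^ v) =
      q ^ u • (qy k a q ^ u * qx k a q ^ (v + 1)) := by
  have := mul_mon k a q 0 1 u v
  simpa [pow_one, add_comm] using this

lemma mon_mul_qx (u v : ℕ) :
    (qy k a q ^ u * qx k a q ^ v) * qx k a q = qy k a q ^ u * qx k a q ^ (v + 1) := by
  rw [mul_assoc, ← pow_succ]

lemma qy_mul_mon (u v : ℕ) :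
    qy k a q * (qy k a q ^ u * qx k a q ^ v) = qy k a q ^ (u + 1) * qx k a q ^ v := by
  rw [← mul_assoc, ← pow_succ']

lemma mon_mul_qy (u v : ℕ) :
    (qy k a q ^ u * qx k a q ^ v) * qy k a q =
      q ^ v • (qy k a q ^ (u + 1) * qx k a q ^ v) := by
  have := mul_mon k a q u v 1 0
  simpa [pow_one] using this




/-- basis vector indexed by naturals; zero function if out of range -/
def E (u v : ℕ) : Fin a × Fin a → k := fun p => if (p.1 : ℕ) = u ∧ (p.2 : ℕ) = v then 1 else 0

lemma E_apply (u v : ℕ) (p : Fin a × Fin a) :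
    E k a u v p = if (p.1 : ℕ) = u ∧ (p.2 : ℕ) = v then 1 else 0 := rfl

lemma E_zero_left {u : ℕ} (h : a ≤ u) (v : ℕ) : E k a u v = 0 := by
  funext p
  have := p.1.isLt
  simp only [E, Pi.zero_apply, ite_eq_right_iff]
  intro hc; omega

lemma E_zero_right (u : ℕ) {v : ℕ} (h : a ≤ v) : E k a u v = 0 := by
  funext p
  have := p.2.isLt
  simp only [E, Pi.zero_apply, ite_eq_right_iff]
  intro hc; omega

def LX : (Fin a × Fin a → k) →ₗ[k] (Fin a × Fin a → k) where
  toFun f p := if h : 0 < (p.2 : ℕ) then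
      q ^ (p.1 : ℕ) * f (p.1, ⟨(p.2 : ℕ) - 1, lt_of_le_of_lt (Nat.sub_le _ _) p.2.isLt⟩)
    else 0
  map_add' f g := by
    funext p
    by_cases h : 0 < (p.2 : ℕ) <;> simp [h, mul_add]
  map_smul' c f := by
    funext p
    by_cases h : 0 < (p.2 : ℕ) <;> simp [h, mul_left_comm]

def LY : (Fin a × Fin a → k) →ₗ[k] (Fin a × Fin a → k) where
  toFun f p := if h : 0 < (p.1 : ℕ) then
      f (⟨(p.1 : ℕ) - 1, lt_of_le_of_lt (Nat.sub_le _ _) p.1.isLt⟩, p.2)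
    else 0
  map_add' f g := by
    funext p
    by_cases h : 0 < (p.1 : ℕ) <;> simp [h]
  map_smul' c f := by
    funext p
    by_cases h : 0 < (p.1 : ℕ) <;> simp [h]

lemma LX_apply (f : Fin a × Fin a → k) (p : Fin a × Fin a) :
    LX k a q f p = if h : 0 < (p.2 : ℕ) then
      q ^ (p.1 : ℕ) * f (p.1, ⟨(p.2 : ℕ) - 1, lt_of_le_of_lt (Nat.sub_le _ _) p.2.isLt⟩)
    else 0 := rfl

lemma LY_apply (f : Fin a × Fin a → k) (p : Fin a × Fin a) :
    LY k a f p = if h : 0 < (p.1 : ℕ) then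
      f (⟨(p.1 : ℕ) - 1, lt_of_le_of_lt (Nat.sub_le _ _) p.1.isLt⟩, p.2)
    else 0 := rfl

lemma LX_E (u v : ℕ) : LX k a q (E k a u v) = q ^ u • E k a u (v + 1) := by
  funext p
  by_cases h2 : 0 < (p.2 : ℕ)
  · by_cases hc : (p.1 : ℕ) = u ∧ (p.2 : ℕ) = v + 1
    · have h3 : (p.2 : ℕ) - 1 = v := by omega
      simp [LX_apply, E_apply, h2, hc, h3, hc.1]
    · have h3 : ¬((p.1 : ℕ) = u ∧ (p.2 : ℕ) - 1 = v) := by omega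
      simp [LX_apply, E_apply, h2, h3, hc]
  · have h3 : ¬((p.1 : ℕ) = u ∧ (p.2 : ℕ) = v + 1) := by omega
    simp [LX_apply, E_apply, h2, h3]

lemma LY_E (u v : ℕ) : LY k a (E k a u v) = E k a (u + 1) v := by
  funext p
  by_cases h1 : 0 < (p.1 : ℕ)
  · by_cases hc : (p.1 : ℕ) = u + 1 ∧ (p.2 : ℕ) = v
    · have h3 : (p.1 : ℕ) - 1 = u := by omega
      simp [LY_apply, E_apply, h1, hc, h3]
    · have h3 : ¬((p.1 : ℕ) - 1 = u ∧ (p.2 : ℕ) = v) := by omega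
      simp [LY_apply, E_apply, h1, h3, hc]
  · have h3 : ¬((p.1 : ℕ) = u + 1 ∧ (p.2 : ℕ) = v) := by omega
    simp [LY_apply, E_apply, h1, h3]

lemma LX_pow_E (v : ℕ) : ((LX k a q) ^ v) (E k a 0 0) = E k a 0 v := by
  induction v with
  | zero => simp
  | succ v ih => rw [pow_succ', Module.End.mul_apply, ih, LX_E, pow_zero, one_smul]

lemma LY_pow_E (u v : ℕ) : ((LY k a) ^ u) (E k a 0 v) = E k a u v := by
  induction u with
  | zero => simp
  | succ u ih => rw [pow_succ', Module.End.mul_apply, ih, LY_E]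

lemma LX_pow_vanish : ∀ (n : ℕ) (f : Fin a × Fin a → k) (p : Fin a × Fin a),
    (p.2 : ℕ) < n → ((LX k a q) ^ n) f p = 0 := by
  intro n
  induction n with
  | zero => intro f p hp; omega
  | succ n ih =>
    intro f p hp
    rw [pow_succ', Module.End.mul_apply, LX_apply]
    by_cases h2 : 0 < (p.2 : ℕ)
    · rw [dif_pos h2, ih _ _ (by simp; omega), mul_zero]
    · rw [dif_neg h2]

lemma LY_pow_vanish : ∀ (n : ℕ) (f : Fin a × Fin a → k) (p : Fin a × Fin a),
    (p.1 : ℕ) < n → ((LY k a) ^ n) f p = 0 := by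
  intro n
  induction n with
  | zero => intro f p hp; omega
  | succ n ih =>
    intro f p hp
    rw [pow_succ', Module.End.mul_apply, LY_apply]
    by_cases h1 : 0 < (p.1 : ℕ)
    · rw [dif_pos h1, ih _ _ (by simp; omega)]
    · rw [dif_neg h1]

lemma LX_pow_a : (LX k a q) ^ a = 0 :=
  LinearMap.ext fun f => funext fun p => LX_pow_vanish k a q a f p p.2.isLt

lemma LY_pow_a : (LY k a) ^ a = 0 :=
  LinearMap.ext fun f => funext fun p => LY_pow_vanish k a a f p p.1.isLt

lemma LXY_rel : LX k a q * LY k a =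
    algebraMap k (Module.End k (Fin a × Fin a → k)) q * (LY k a * LX k a q) := by
  refine LinearMap.ext fun f => funext fun p => ?_
  rw [Module.End.mul_apply, Module.End.mul_apply, Module.algebraMap_end_apply,
    Pi.smul_apply, Module.End.mul_apply, smul_eq_mul]
  by_cases h1 : 0 < (p.1 : ℕ) <;> by_cases h2 : 0 < (p.2 : ℕ) <;>
    simp [LX_apply, LY_apply, h1, h2]
  rw [← mul_assoc, ← pow_succ']
  congr 2
  omega

def rep : Qci k a q →ₐ[k] Module.End k (Fin a × Fin a → k) :=
  RingQuot.liftAlgHom k ⟨FreeAlgebra.lift k ![LX k a q, LY k a], by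
    rintro x y h
    induction h with
    | xa =>
      simp only [map_pow, map_zero, FreeAlgebra.lift_ι_apply, Matrix.cons_val_zero]
      exact LX_pow_a k a q
    | ya =>
      simp only [map_pow, map_zero, FreeAlgebra.lift_ι_apply, Matrix.cons_val_one,
        Matrix.head_cons]
      exact LY_pow_a k a
    | comm =>
      simp only [map_mul, FreeAlgebra.lift_ι_apply, Matrix.cons_val_zero,
        Matrix.cons_val_one, Matrix.head_cons, AlgHom.commutes]
      exact LXY_rel k a q⟩

lemma rep_qx : rep k a q (qx k a q) = LX k a q := by
  rw [rep, qx, RingQuot.liftAlgHom_mkAlgHom_apply, FreeAlgebra.lift_ι_apply,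
    Matrix.cons_val_zero]

lemma rep_qy : rep k a q (qy k a q) = LY k a := by
  rw [rep, qy, RingQuot.liftAlgHom_mkAlgHom_apply, FreeAlgebra.lift_ι_apply,
    Matrix.cons_val_one, Matrix.cons_val_zero]

def psi : Qci k a q →ₗ[k] (Fin a × Fin a → k) where
  toFun z := rep k a q z (E k a 0 0)
  map_add' z w := by simp only [map_add, LinearMap.add_apply, Pi.add_apply]
  map_smul' c z := by simp only [map_smul, LinearMap.smul_apply, Pi.smul_apply,
    RingHom.id_apply]

lemma psi_mon (u v : ℕ) :
    psi k a q (qy k a q ^ u * qx k a q ^ v) = E k a u v := by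
  show rep k a q (qy k a q ^ u * qx k a q ^ v) (E k a 0 0) = E k a u v
  rw [map_mul, map_pow, map_pow, rep_qx, rep_qy, Module.End.mul_apply,
    LX_pow_E, LY_pow_E]

lemma eval_sum_x (d : Fin a × Fin a → k) (u0 v0 : Fin a) (h : (v0 : ℕ) + 1 < a) :
    psi k a q (∑ p : Fin a × Fin a,
        d p • (qy k a q ^ (p.1 : ℕ) * qx k a q ^ ((p.2 : ℕ) + 1)))
      (u0, ⟨(v0 : ℕ) + 1, h⟩) = d (u0, v0) := by
  rw [map_sum, Finset.sum_apply, Finset.sum_eq_single (u0, v0)]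
  · rw [map_smul, Pi.smul_apply, psi_mon, smul_eq_mul, E_apply, if_pos ⟨rfl, rfl⟩, mul_one]
  · intro p _ hp
    rw [map_smul, Pi.smul_apply, psi_mon, smul_eq_mul, E_apply]
    have hcond : ¬((((u0, (⟨(v0 : ℕ) + 1, h⟩ : Fin a)) : Fin a × Fin a).1 : ℕ) = (p.1 : ℕ) ∧
        (((u0, (⟨(v0 : ℕ) + 1, h⟩ : Fin a)) : Fin a × Fin a).2 : ℕ) = (p.2 : ℕ) + 1) := by
      rintro ⟨hA, hB⟩
      dsimp only at hA hB
      exact hp (Prod.ext_iff.mpr ⟨Fin.ext hA.symm, Fin.ext (show (p.2 : ℕ) = (v0 : ℕ) by omega)⟩)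
    rw [if_neg hcond, mul_zero]
  · intro hn; exact absurd (Finset.mem_univ _) hn

lemma eval_sum_y (d : Fin a × Fin a → k) (u0 v0 : Fin a) (h : (u0 : ℕ) + 1 < a) :
    psi k a q (∑ p : Fin a × Fin a,
        d p • (qy k a q ^ ((p.1 : ℕ) + 1) * qx k a q ^ (p.2 : ℕ)))
      (⟨(u0 : ℕ) + 1, h⟩, v0) = d (u0, v0) := by
  rw [map_sum, Finset.sum_apply, Finset.sum_eq_single (u0, v0)]
  · rw [map_smul, Pi.smul_apply, psi_mon, smul_eq_mul, E_apply, if_pos ⟨rfl, rfl⟩, mul_one]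
  · intro p _ hp
    rw [map_smul, Pi.smul_apply, psi_mon, smul_eq_mul, E_apply]
    have hcond : ¬(((((⟨(u0 : ℕ) + 1, h⟩ : Fin a), v0) : Fin a × Fin a).1 : ℕ) = (p.1 : ℕ) + 1 ∧
        ((((⟨(u0 : ℕ) + 1, h⟩ : Fin a), v0) : Fin a × Fin a).2 : ℕ) = (p.2 : ℕ)) := by
      rintro ⟨hA, hB⟩
      dsimp only at hA hB
      exact hp (Prod.ext_iff.mpr ⟨Fin.ext (show (p.1 : ℕ) = (u0 : ℕ) by omega), Fin.ext hB.symm⟩)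
    rw [if_neg hcond, mul_zero]
  · intro hn; exact absurd (Finset.mem_univ _) hn

def mon (p : Fin a × Fin a) : Qci k a q := qy k a q ^ (p.1 : ℕ) * qx k a q ^ (p.2 : ℕ)

lemma mon_mul_mem (u v u' v' : ℕ) :
    (qy k a q ^ u * qx k a q ^ v) * (qy k a q ^ u' * qx k a q ^ v') ∈
      Submodule.span k (Set.range (mon k a q)) := by
  rw [mul_mon]
  by_cases hc : u + u' < a ∧ v + v' < a
  · exact Submodule.smul_mem _ _
      (Submodule.subset_span ⟨(⟨u + u', hc.1⟩, ⟨v + v', hc.2⟩), rfl⟩)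
  · have h0 : qy k a q ^ (u + u') * qx k a q ^ (v + v') = 0 := by
      rcases (by omega : a ≤ u + u' ∨ a ≤ v + v') with hh | hh
      · rw [qy_pow_zero k a q hh, zero_mul]
      · rw [qx_pow_zero k a q hh, mul_zero]
    rw [h0, smul_zero]
    exact zero_mem _

lemma span_mon_mul (z1 z2 : Qci k a q)
    (h1 : z1 ∈ Submodule.span k (Set.range (mon k a q)))
    (h2 : z2 ∈ Submodule.span k (Set.range (mon k a q))) :
    z1 * z2 ∈ Submodule.span k (Set.range (mon k a q)) := by
  have h3 := Submodule.mul_mem_mul h1 h2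
  rw [Submodule.span_mul_span] at h3
  refine Submodule.span_le.mpr ?_ h3
  rintro w ⟨m1, hm1, m2, hm2, rfl⟩
  obtain ⟨p, rfl⟩ := hm1
  obtain ⟨p', rfl⟩ := hm2
  exact mon_mul_mem k a q _ _ _ _

lemma span_mon_top (ha : 2 ≤ a) :
    Submodule.span k (Set.range (mon k a q)) = ⊤ := by
  rw [eq_top_iff]
  rintro z -
  obtain ⟨w, rfl⟩ := RingQuot.mkAlgHom_surjective k (QciRel k a q) z
  refine FreeAlgebra.induction k (Fin 2)
    (motive := fun w => RingQuot.mkAlgHom k (QciRel k a q) w ∈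
      Submodule.span k (Set.range (mon k a q))) ?_ ?_ ?_ ?_ w
  · intro r
    rw [AlgHom.commutes]
    have h1 : (algebraMap k (Qci k a q)) r =
        r • (mon k a q (⟨0, by omega⟩, ⟨0, by omega⟩)) := by
      rw [Algebra.algebraMap_eq_smul_one]
      congr 1
      simp [mon]
    rw [h1]
    exact Submodule.smul_mem _ _ (Submodule.subset_span ⟨_, rfl⟩)
  · intro i
    have hx : qx k a q ∈ Submodule.span k (Set.range (mon k a q)) := by
      have h1 : qx k a q = mon k a q (⟨0, by omega⟩, ⟨1, by omega⟩) := by simp [mon]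
      rw [h1]; exact Submodule.subset_span ⟨_, rfl⟩
    have hy : qy k a q ∈ Submodule.span k (Set.range (mon k a q)) := by
      have h1 : qy k a q = mon k a q (⟨1, by omega⟩, ⟨0, by omega⟩) := by simp [mon]
      rw [h1]; exact Submodule.subset_span ⟨_, rfl⟩
    fin_cases i
    · exact hx
    · exact hy
  · intro w1 w2 hw1 hw2
    rw [map_mul]
    exact span_mon_mul k a q _ _ hw1 hw2
  · intro w1 w2 hw1 hw2
    rw [map_add]
    exact Submodule.add_mem _ hw1 hw2

lemma mem_center_of (z : Qci k a q) (hx : qx k a q * z = z * qx k a q)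
    (hy : qy k a q * z = z * qy k a q) : z ∈ Subalgebra.center k (Qci k a q) := by
  rw [Subalgebra.mem_center_iff]
  intro g
  obtain ⟨w, rfl⟩ := RingQuot.mkAlgHom_surjective k (QciRel k a q) g
  refine FreeAlgebra.induction k (Fin 2)
    (motive := fun w => RingQuot.mkAlgHom k (QciRel k a q) w * z =
      z * RingQuot.mkAlgHom k (QciRel k a q) w) ?_ ?_ ?_ ?_ w
  · intro r
    rw [AlgHom.commutes]
    exact Algebra.commutes r z
  · intro i
    fin_cases i
    · exact hx
    · exact hy
  · intro w1 w2 h1 h2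
    rw [map_mul, mul_assoc, h2, ← mul_assoc, h1, mul_assoc]
  · intro w1 w2 h1 h2
    rw [map_add, add_mul, mul_add, h1, h2]

lemma m_central (ha : 2 ≤ a) (hq0 : q ≠ 0) :
    qx k a q ^ (a - 1) * qy k a q ^ (a - 1) ∈ Subalgebra.center k (Qci k a q) := by
  set l := a - 1 with hl
  have hql : q ^ l ≠ 0 := pow_ne_zero _ hq0
  apply mem_center_of
  · have h1 : qx k a q * (qx k a q ^ l * qy k a q ^ l) = 0 := by
      rw [← mul_assoc, ← pow_succ', qx_pow_zero k a q (by omega), zero_mul]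
    have h2 : (qx k a q ^ l * qy k a q ^ l) * qx k a q = 0 := by
      have h3 : q ^ l • ((qx k a q ^ l * qy k a q ^ l) * qx k a q) = 0 := by
        calc q ^ l • ((qx k a q ^ l * qy k a q ^ l) * qx k a q)
            = qx k a q ^ l * (q ^ l • (qy k a q ^ l * qx k a q)) := by
              rw [mul_assoc, mul_smul_comm]
          _ = qx k a q ^ l * (qx k a q * qy k a q ^ l) := by rw [← qx_mul_qy_pow]
          _ = 0 := by rw [← mul_assoc, ← pow_succ, qx_pow_zero k a q (by omega), zero_mul]
      exact (smul_eq_zero.mp h3).resolve_left hql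
    rw [h1, h2]
  · have h1 : (qx k a q ^ l * qy k a q ^ l) * qy k a q = 0 := by
      rw [mul_assoc, ← pow_succ, qy_pow_zero k a q (by omega), mul_zero]
    have h2 : qy k a q * (qx k a q ^ l * qy k a q ^ l) = 0 := by
      have h4 : qx k a q ^ l * qy k a q = q ^ l • (qy k a q * qx k a q ^ l) := by
        simpa using qx_pow_mul_qy_pow k a q l 1
      have h3 : q ^ l • (qy k a q * (qx k a q ^ l * qy k a q ^ l)) = 0 := by
        calc q ^ l • (qy k a q * (qx k a q ^ l * qy k a q ^ l))
            = (q ^ l • (qy k a q * qx k a q ^ l)) * qy k a q ^ l := by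
              rw [smul_mul_assoc, mul_assoc]
          _ = (qx k a q ^ l * qy k a q) * qy k a q ^ l := by rw [← h4]
          _ = qx k a q ^ l * qy k a q ^ (l + 1) := by rw [mul_assoc, ← pow_succ']
          _ = 0 := by rw [qy_pow_zero k a q (by omega), mul_zero]
      exact (smul_eq_zero.mp h3).resolve_left hql
    rw [h1, h2]

end QciAux

open QciAux in
/-- The center of `A = k⟨X,Y⟩/(X^a, XY−qYX, Y^a)`, `q` a primitive `a`-th root
of unity, is 2-dimensional, spanned by `1` and `x^{a-1}y^{a-1}`. -/
theorem stmt_6 (k : Type) [Field k] (a : ℕ) (ha : 2 ≤ a) (q : k)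
    (hq : IsPrimitiveRoot q a) :
    Subalgebra.toSubmodule (Subalgebra.center k (Qci k a q)) =
      Submodule.span k {1, qx k a q ^ (a - 1) * qy k a q ^ (a - 1)} ∧
    Module.finrank k (Subalgebra.center k (Qci k a q)) = 2 := by
  have h0 : 0 < a := by omega
  have hl : a - 1 < a := by omega
  have hq0 : q ≠ 0 := hq.ne_zero (by omega)
  set m : Qci k a q := qx k a q ^ (a - 1) * qy k a q ^ (a - 1) with hm
  have hcenter_le : ∀ z ∈ Subalgebra.center k (Qci k a q),
      z ∈ Submodule.span k ({1, m} : Set (Qci k a q)) := by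
    intro z hz
    have hzmem : z ∈ Submodule.span k (Set.range (mon k a q)) := by
      rw [span_mon_top k a q ha]; trivial
    obtain ⟨c, hc⟩ := (Submodule.mem_span_range_iff_exists_fun k).mp hzmem
    have hxz : qx k a q * z = z * qx k a q := Subalgebra.mem_center_iff.mp hz (qx k a q)
    have hyz : qy k a q * z = z * qy k a q := Subalgebra.mem_center_iff.mp hz (qy k a q)
    have e3 : (∑ p : Fin a × Fin a,
          (c p * q ^ (p.1 : ℕ)) • (qy k a q ^ (p.1 : ℕ) * qx k a q ^ ((p.2 : ℕ) + 1)))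
        = ∑ p : Fin a × Fin a, c p • (qy k a q ^ (p.1 : ℕ) * qx k a q ^ ((p.2 : ℕ) + 1)) := by
      have l1 : qx k a q * z = ∑ p : Fin a × Fin a,
          (c p * q ^ (p.1 : ℕ)) • (qy k a q ^ (p.1 : ℕ) * qx k a q ^ ((p.2 : ℕ) + 1)) := by
        rw [← hc, Finset.mul_sum]
        refine Finset.sum_congr rfl fun p _ => ?_
        rw [mul_smul_comm,
          show mon k a q p = qy k a q ^ (p.1 : ℕ) * qx k a q ^ (p.2 : ℕ) from rfl,
          qx_mul_mon, smul_smul]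
      have l2 : z * qx k a q = ∑ p : Fin a × Fin a,
          c p • (qy k a q ^ (p.1 : ℕ) * qx k a q ^ ((p.2 : ℕ) + 1)) := by
        rw [← hc, Finset.sum_mul]
        refine Finset.sum_congr rfl fun p _ => ?_
        rw [smul_mul_assoc,
          show mon k a q p = qy k a q ^ (p.1 : ℕ) * qx k a q ^ (p.2 : ℕ) from rfl,
          mon_mul_qx]
      rw [← l1, ← l2, hxz]
    have keyx : ∀ u0 v0 : Fin a, (v0 : ℕ) + 1 < a → (u0 : ℕ) ≠ 0 → c (u0, v0) = 0 := by
      intro u0 v0 h hu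
      have h5 : c (u0, v0) * q ^ (u0 : ℕ) = c (u0, v0) :=
        (eval_sum_x k a q (fun p => c p * q ^ (p.1 : ℕ)) u0 v0 h).symm.trans
          ((congrFun (congrArg (fun w => psi k a q w) e3) (u0, ⟨(v0 : ℕ) + 1, h⟩)).trans
            (eval_sum_x k a q c u0 v0 h))
      by_contra hcc
      exact hq.pow_ne_one_of_pos_of_lt (by omega) u0.isLt
        (mul_left_cancel₀ hcc (h5.trans (mul_one _).symm))
    have e3' : (∑ p : Fin a × Fin a,
          c p • (qy k a q ^ ((p.1 : ℕ) + 1) * qx k a q ^ (p.2 : ℕ)))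
        = ∑ p : Fin a × Fin a,
          (c p * q ^ (p.2 : ℕ)) • (qy k a q ^ ((p.1 : ℕ) + 1) * qx k a q ^ (p.2 : ℕ)) := by
      have l1 : qy k a q * z = ∑ p : Fin a × Fin a,
          c p • (qy k a q ^ ((p.1 : ℕ) + 1) * qx k a q ^ (p.2 : ℕ)) := by
        rw [← hc, Finset.mul_sum]
        refine Finset.sum_congr rfl fun p _ => ?_
        rw [mul_smul_comm,
          show mon k a q p = qy k a q ^ (p.1 : ℕ) * qx k a q ^ (p.2 : ℕ) from rfl,
          qy_mul_mon]
      have l2 : z * qy k a q = ∑ p : Fin a × Fin a,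
          (c p * q ^ (p.2 : ℕ)) • (qy k a q ^ ((p.1 : ℕ) + 1) * qx k a q ^ (p.2 : ℕ)) := by
        rw [← hc, Finset.sum_mul]
        refine Finset.sum_congr rfl fun p _ => ?_
        rw [smul_mul_assoc,
          show mon k a q p = qy k a q ^ (p.1 : ℕ) * qx k a q ^ (p.2 : ℕ) from rfl,
          mon_mul_qy, smul_smul]
      rw [← l1, ← l2, hyz]
    have keyy : ∀ u0 v0 : Fin a, (u0 : ℕ) + 1 < a → (v0 : ℕ) ≠ 0 → c (u0, v0) = 0 := by
      intro u0 v0 h hv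
      have h5 : c (u0, v0) = c (u0, v0) * q ^ (v0 : ℕ) :=
        (eval_sum_y k a q c u0 v0 h).symm.trans
          ((congrFun (congrArg (fun w => psi k a q w) e3') (⟨(u0 : ℕ) + 1, h⟩, v0)).trans
            (eval_sum_y k a q (fun p => c p * q ^ (p.2 : ℕ)) u0 v0 h))
      by_contra hcc
      exact hq.pow_ne_one_of_pos_of_lt (by omega) v0.isLt
        (mul_left_cancel₀ hcc ((mul_one _).trans h5)).symm
    set P0 : Fin a × Fin a := (⟨0, h0⟩, ⟨0, h0⟩) with hP0
    set PL : Fin a × Fin a := (⟨a - 1, hl⟩, ⟨a - 1, hl⟩) with hPL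
    have hkey : ∀ p : Fin a × Fin a, p ≠ P0 → p ≠ PL → c p = 0 := by
      rintro ⟨u, v⟩ hp0 hpl
      have hval0 : ¬((u : ℕ) = 0 ∧ (v : ℕ) = 0) := fun hv =>
        hp0 (Prod.ext_iff.mpr ⟨Fin.ext hv.1, Fin.ext hv.2⟩)
      have hvall : ¬((u : ℕ) = a - 1 ∧ (v : ℕ) = a - 1) := fun hv =>
        hpl (Prod.ext_iff.mpr ⟨Fin.ext hv.1, Fin.ext hv.2⟩)
      have hua := u.isLt
      have hva := v.isLt
      by_cases hv2 : (v : ℕ) = a - 1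
      · exact keyy u v (by omega) (by omega)
      · by_cases hu0 : (u : ℕ) = 0
        · exact keyy u v (by omega) (by omega)
        · exact keyx u v (by omega) hu0
    have hPne : P0 ≠ PL := by
      intro hP
      have h7 : ((P0.1 : Fin a) : ℕ) = ((PL.1 : Fin a) : ℕ) := by rw [hP]
      simp only [hP0, hPL] at h7
      omega
    have hzz : z = c P0 • mon k a q P0 + c PL • mon k a q PL := by
      rw [← hc, ← Finset.sum_subset (Finset.subset_univ ({P0, PL} : Finset (Fin a × Fin a)))]
      · rw [Finset.sum_pair hPne]
      · intro p _ hp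
        simp only [Finset.mem_insert, Finset.mem_singleton] at hp
        push_neg at hp
        rw [hkey p hp.1 hp.2, zero_smul]
    have hmon0 : mon k a q P0 = 1 := by simp [mon, hP0]
    have hmonL : mon k a q PL = (q ^ ((a - 1) * (a - 1)))⁻¹ • m := by
      have h6 : mon k a q PL = qy k a q ^ (a - 1) * qx k a q ^ (a - 1) := rfl
      rw [h6, hm]
      exact ((inv_smul_eq_iff₀ (pow_ne_zero _ hq0)).mpr
        (qx_pow_mul_qy_pow k a q (a - 1) (a - 1))).symm
    rw [hzz, hmon0, hmonL]
    refine Submodule.add_mem _ ?_ ?_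
    · exact Submodule.smul_mem _ _ (Submodule.subset_span (Set.mem_insert _ _))
    · exact Submodule.smul_mem _ _ (Submodule.smul_mem _ _
        (Submodule.subset_span (Set.mem_insert_of_mem _ rfl)))
  have hpart1 : Subalgebra.toSubmodule (Subalgebra.center k (Qci k a q)) =
      Submodule.span k ({1, m} : Set (Qci k a q)) := by
    apply le_antisymm
    · intro z hz
      exact hcenter_le z hz
    · rw [Submodule.span_le]
      rintro w hw
      rcases hw with rfl | hw
      · simp only [SetLike.mem_coe, Subalgebra.mem_toSubmodule]
        exact one_mem (Subalgebra.center k (Qci k a q))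
      · rcases hw with rfl
        simp only [SetLike.mem_coe, Subalgebra.mem_toSubmodule]
        exact m_central k a q ha hq0
  refine ⟨hpart1, ?_⟩
  have hind : LinearIndependent k ![(1 : Qci k a q), m] := by
    rw [LinearIndependent.pair_iff]
    intro s t hst
    have h1 : psi k a q (s • 1 + t • m) = 0 := by rw [hst, map_zero]
    have hp1 : psi k a q (1 : Qci k a q) = E k a 0 0 := by
      have h8 := psi_mon k a q 0 0
      simpa using h8
    have hpm : psi k a q m = q ^ ((a - 1) * (a - 1)) • E k a (a - 1) (a - 1) := by
      rw [hm, qx_pow_mul_qy_pow, map_smul, psi_mon]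
    rw [map_add, map_smul, map_smul, hp1, hpm] at h1
    have hne1 : ¬((0 : ℕ) = a - 1) := by omega
    have hne2 : ¬((a - 1 : ℕ) = 0) := by omega
    constructor
    · have h2 := congrFun h1 (⟨0, h0⟩, ⟨0, h0⟩)
      simpa [E_apply, hne1] using h2
    · have h3 := congrFun h1 (⟨a - 1, hl⟩, ⟨a - 1, hl⟩)
      simpa [E_apply, hne2, hq0, pow_ne_zero] using h3
  have hrange : Set.range ![(1 : Qci k a q), m] = {1, m} := by
    ext w
    simp only [Set.mem_range, Fin.exists_fin_two, Matrix.cons_val_zero, Matrix.cons_val_one,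
      Matrix.head_cons, Set.mem_insert_iff, Set.mem_singleton_iff, eq_comm]
  have h2 := finrank_span_eq_card hind
  rw [hrange, Fintype.card_fin] at h2
  have h4 : Module.finrank k (Subalgebra.center k (Qci k a q)) =
      Module.finrank k (Subalgebra.toSubmodule (Subalgebra.center k (Qci k a q))) := rfl
  rw [h4, hpart1, h2]
end
end

section
/- In the enveloping algebra A^e of A = k⟨X,Y⟩/(X^a, XY−qYX, Y^a) with q a primitive a-th root of unity, the identity β_x(−1)·γ_y(2) = γ_y(0)·β_x(0) holds, where β_x(s) = ∑_{i=0}^{a-2} c_i q^{si} (x^{a-2-i} ⊗ x^i), γ_y(s) = ∑_{j=0}^{a-1} q^{js}(y^j ⊗ y^{a-1-j}), and c_i = 1+q+...+q^i. -/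
open scoped TensorProduct
open Finset MulOpposite

noncomputable section

lemma qci_comm (k : Type) [Field k] (a : ℕ) (q : k) :
    qx k a q * qy k a q = q • (qy k a q * qx k a q) := by
  have h := RingQuot.mkAlgHom_rel k (QciRel.comm (k := k) (a := a) (q := q))
  simpa [qx, qy, map_mul, Algebra.smul_def, AlgHom.commutes] using h

lemma qci_comm_pow (k : Type) [Field k] (a : ℕ) (q : k) (m n : ℕ) :
    qx k a q ^ m * qy k a q ^ n = q ^ (m * n) • (qy k a q ^ n * qx k a q ^ m) := by
  set x := qx k a q
  set y := qy k a q
  have h1 : ∀ n : ℕ, x * y ^ n = q ^ n • (y ^ n * x) := by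
    intro n
    induction n with
    | zero => simp
    | succ n ih =>
      rw [pow_succ, ← mul_assoc, ih, smul_mul_assoc, mul_assoc, qci_comm,
        mul_smul_comm, smul_smul, ← pow_succ, ← mul_assoc, ← pow_succ]
  induction m with
  | zero => simp
  | succ m ih =>
    rw [pow_succ', mul_assoc, ih, mul_smul_comm, ← mul_assoc, h1, smul_mul_assoc,
      smul_smul, mul_assoc, ← pow_succ', ← pow_add]
    ring_nf

/-- In `A^e = A ⊗ A^op` for `A = k⟨X,Y⟩/(X^a, XY−qYX, Y^a)`:
`β_x(−1) · γ_y(2) = γ_y(0) · β_x(0)`. -/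
theorem stmt_12 (k : Type) [Field k] (a : ℕ) (ha : 3 ≤ a) (q : k)
    (hq : IsPrimitiveRoot q a)
    (c : ℕ → k) (hc : ∀ i, c i = ∑ j ∈ range (i + 1), q ^ j) :
    let x := qx k a q
    let y := qy k a q
    let βx : ℤ → Qci k a q ⊗[k] (Qci k a q)ᵐᵒᵖ := fun s =>
      ∑ i ∈ range (a - 1), (c i * q ^ (s * (i : ℤ))) •
        ((x ^ (a - 2 - i) : Qci k a q) ⊗ₜ[k] (op (x ^ i) : (Qci k a q)ᵐᵒᵖ))
    let γy : ℤ → Qci k a q ⊗[k] (Qci k a q)ᵐᵒᵖ := fun s =>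
      ∑ j ∈ range a, q ^ (s * (j : ℤ)) •
        ((y ^ j : Qci k a q) ⊗ₜ[k] (op (y ^ (a - 1 - j)) : (Qci k a q)ᵐᵒᵖ))
    βx (-1) * γy 2 = γy 0 * βx 0 := by
  intro x y βx γy
  have hqa : q ^ a = 1 := hq.pow_eq_one
  have hq0 : q ≠ 0 := by
    intro h
    rw [h, zero_pow (by omega : a ≠ 0)] at hqa
    exact zero_ne_one hqa
  show βx (-1) * γy 2 = γy 0 * βx 0
  simp only [βx, γy]
  rw [Finset.sum_mul_sum, Finset.sum_mul_sum]
  conv_rhs => rw [Finset.sum_comm]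
  refine Finset.sum_congr rfl fun i hi => Finset.sum_congr rfl fun j hj => ?_
  rw [Finset.mem_range] at hi hj
  have hi' : i ≤ a - 2 := by omega
  have hj' : j ≤ a - 1 := by omega
  -- simplify the integer powers
  have e1 : q ^ ((-1 : ℤ) * (i : ℤ)) = (q ^ i)⁻¹ := by
    rw [neg_one_mul, zpow_neg, zpow_natCast]
  have e2 : q ^ ((2 : ℤ) * (j : ℤ)) = q ^ (2 * j) := by
    rw [show (2 : ℤ) * (j : ℤ) = ((2 * j : ℕ) : ℤ) by push_cast; ring, zpow_natCast]
  have e3 : q ^ ((0 : ℤ) * (j : ℤ)) = 1 := by rw [zero_mul, zpow_zero]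
  have e4 : q ^ ((0 : ℤ) * (i : ℤ)) = 1 := by rw [zero_mul, zpow_zero]
  rw [e1, e2, e3, e4, mul_one, one_smul]
  rw [smul_mul_smul_comm, Algebra.TensorProduct.tmul_mul_tmul,
    ← MulOpposite.op_mul, qci_comm_pow, ← TensorProduct.smul_tmul', smul_smul]
  rw [mul_smul_comm, Algebra.TensorProduct.tmul_mul_tmul,
    ← MulOpposite.op_mul, qci_comm_pow, MulOpposite.op_smul, TensorProduct.tmul_smul, smul_smul]
  congr 1
  -- scalar identity
  have key : q ^ (2 * j + (a - 2 - i) * j) = q ^ (i * (a - 1 - j) + i) := by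
    have h1 : q ^ (2 * j + (a - 2 - i) * j) * q ^ (i * j) = 1 := by
      rw [← pow_add, show 2 * j + (a - 2 - i) * j + i * j = (2 + (a - 2 - i + i)) * j by
        ring, show a - 2 - i + i = a - 2 by omega, show 2 + (a - 2) = a by omega,
        pow_mul, hqa, one_pow]
    have h2 : q ^ (i * (a - 1 - j) + i) * q ^ (i * j) = 1 := by
      rw [← pow_add, show i * (a - 1 - j) + i + i * j = i * (a - 1 - j + j + 1) by
        ring, show a - 1 - j + j + 1 = a by omega, mul_comm i a, pow_mul, hqa, one_pow]
    exact mul_right_cancel₀ (pow_ne_zero _ hq0) (h1.trans h2.symm)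
  field_simp
  rw [mul_assoc, mul_assoc, ← pow_add, ← pow_add, key, add_comm]
end
end

section
/- In the enveloping algebra A^e of A = k⟨X,Y⟩/(X^a, XY−qYX, Y^a) with q a primitive a-th root of unity, the identity β_x(−1)·β_y(1) = β_y(−1)·β_x(1) holds, where β_x(s) = ∑_{i=0}^{a-2} c_i q^{si} (x^{a-2-i} ⊗ x^i), β_y(s) = ∑_{i=0}^{a-2} c_i q^{si} (y^i ⊗ y^{a-2-i}), and c_i = 1+q+...+q^i. -/
open scoped TensorProduct
open Finset MulOpposite

noncomputable section

lemma pow_comm_aux {k : Type} [Field k] {B : Type} [Ring B] [Algebra k B]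
    (q : k) (u v : B) (h : u * v = q • (v * u)) (m n : ℕ) :
    u ^ m * v ^ n = q ^ (m * n) • (v ^ n * u ^ m) := by
  have h1 : ∀ n : ℕ, u * v ^ n = q ^ n • (v ^ n * u) := by
    intro n
    induction n with
    | zero => simp
    | succ n ih =>
      rw [pow_succ', ← mul_assoc, h, smul_mul_assoc, mul_assoc, ih, mul_smul_comm,
        smul_smul, ← mul_assoc, ← pow_succ', ← pow_succ']
  induction m with
  | zero => simp
  | succ m ih =>
    rw [pow_succ, mul_assoc, h1, mul_smul_comm, ← mul_assoc, ih, smul_mul_assoc,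
      smul_smul, ← pow_add, mul_assoc, ← pow_succ]
    ring_nf


/-- In `A^e = A ⊗ A^op` for `A = k⟨X,Y⟩/(X^a, XY−qYX, Y^a)`:
`β_x(−1) · β_y(1) = β_y(−1) · β_x(1)`. -/
theorem stmt_13 (k : Type) [Field k] (a : ℕ) (ha : 3 ≤ a) (q : k)
    (hq : IsPrimitiveRoot q a)
    (c : ℕ → k) (hc : ∀ i, c i = ∑ j ∈ range (i + 1), q ^ j) :
    let x := qx k a q
    let y := qy k a q
    let βx : ℤ → Qci k a q ⊗[k] (Qci k a q)ᵐᵒᵖ := fun s =>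
      ∑ i ∈ range (a - 1), (c i * q ^ (s * (i : ℤ))) •
        ((x ^ (a - 2 - i) : Qci k a q) ⊗ₜ[k] (op (x ^ i) : (Qci k a q)ᵐᵒᵖ))
    let βy : ℤ → Qci k a q ⊗[k] (Qci k a q)ᵐᵒᵖ := fun s =>
      ∑ i ∈ range (a - 1), (c i * q ^ (s * (i : ℤ))) •
        ((y ^ i : Qci k a q) ⊗ₜ[k] (op (y ^ (a - 2 - i)) : (Qci k a q)ᵐᵒᵖ))
    βx (-1) * βy 1 = βy (-1) * βx 1 := by
  intro x y βx βy
  have hq0 : q ≠ 0 := hq.ne_zero (by omega)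
  have hqa : (q : k) ^ ((a : ℤ)) = 1 := by
    rw [zpow_natCast]; exact hq.pow_eq_one
  have hcomm := qci_comm k a q
  unfold βx βy
  rw [Finset.sum_mul_sum, Finset.sum_mul_sum]
  conv_rhs => rw [Finset.sum_comm]
  refine Finset.sum_congr rfl fun i hi => Finset.sum_congr rfl fun j hj => ?_
  rw [Finset.mem_range] at hi hj
  have hia : i ≤ a - 2 := by omega
  have hja : j ≤ a - 2 := by omega
  rw [smul_mul_smul_comm, smul_mul_smul_comm, Algebra.TensorProduct.tmul_mul_tmul,
    Algebra.TensorProduct.tmul_mul_tmul, ← op_mul, ← op_mul,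
    pow_comm_aux q x y hcomm (a - 2 - i) j, pow_comm_aux q x y hcomm i (a - 2 - j)]
  simp only [op_smul, TensorProduct.smul_tmul', TensorProduct.tmul_smul, smul_smul]
  congr 1
  -- scalar identity in k
  have e1 : (((a - 2 - i) * j : ℕ) : ℤ) = ((a : ℤ) - 2 - i) * j := by
    rw [Nat.cast_mul]; congr 1 <;> omega
  have e2 : ((i * (a - 2 - j) : ℕ) : ℤ) = (i : ℤ) * ((a : ℤ) - 2 - j) := by
    rw [Nat.cast_mul]; congr 1 <;> omega
  rw [← zpow_natCast q ((a - 2 - i) * j), ← zpow_natCast q (i * (a - 2 - j)), e1, e2]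
  congr 1
  have hqq : q ^ ((-1 : ℤ) * i) * q ^ ((1 : ℤ) * j) * q ^ (((a : ℤ) - 2 - i) * j) =
      q ^ ((-1 : ℤ) * j) * q ^ ((1 : ℤ) * i) * q ^ ((i : ℤ) * ((a : ℤ) - 2 - j)) := by
    rw [← zpow_add₀ hq0, ← zpow_add₀ hq0, ← zpow_add₀ hq0, ← zpow_add₀ hq0]
    have hexp : (-1 : ℤ) * i + 1 * j + ((a : ℤ) - 2 - i) * j =
        ((-1 : ℤ) * j + 1 * i + (i : ℤ) * ((a : ℤ) - 2 - j)) + (a : ℤ) * ((j : ℤ) - i) := by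
      ring
    rw [hexp, zpow_add₀ hq0, zpow_mul, hqa, one_zpow, mul_one]
  linear_combination (c i * c j) * hqq
end
end
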